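/- Let p > 1 and ω > 0. There exists δ > 0 with F(δ) > 0 (hypothesis (H2)) if and only if ω < ω_p, where ω_p = p/(p+1)². -/

import Mathlib

open Real Set Filter Topology

/-- For `F(u) = -ωu²/2 + u^(p+1)/(p+1) - u^(2p)/(2p)` with `p > 1` and `ω > 0`,
there exists `δ > 0` with `F(δ) > 0` (H2) iff `ω < ω_p = p/(p+1)²`. -/
theorem H2_iff (p ω : ℝ) (hp : 1 < p) (hω : 0 < ω)
    (F : ℝ → ℝ)
    (hF : ∀ u > (0 : ℝ), F u = -ω * u ^ 2 / 2 + u ^ (p + 1) / (p + 1) - u ^ (2 * p) / (2 * p)) :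
    (∃ δ > (0 : ℝ), 0 < F δ) ↔ ω < p / (p + 1) ^ 2 := by
  have hp0 : (0:ℝ) < p := by linarith
  have hp1 : (0:ℝ) < p + 1 := by linarith
  have hpne : p ≠ 0 := ne_of_gt hp0
  have hp1ne : p + 1 ≠ 0 := ne_of_gt hp1
  -- rewrite F in terms of t = u^(p-1)
  have key : ∀ u > (0:ℝ), F u = u ^ 2 *
      (-ω / 2 + u ^ (p - 1) / (p + 1) - (u ^ (p - 1)) ^ 2 / (2 * p)) := by
    intro u hu
    have h1 : u ^ (p + 1) = u ^ 2 * u ^ (p - 1) := by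
      rw [show p + 1 = 2 + (p - 1) by ring, rpow_add hu, rpow_two]
    have h2 : u ^ (2 * p) = u ^ 2 * (u ^ (p - 1)) ^ 2 := by
      rw [show 2 * p = 2 + (p - 1) * 2 by ring, rpow_add hu, rpow_two,
        rpow_mul hu.le, rpow_two]
    rw [hF u hu, h1, h2]
    ring
  -- quadratic identity
  have hq : ∀ t : ℝ, -ω / 2 + t / (p + 1) - t ^ 2 / (2 * p) =
      (p / (p + 1) ^ 2 - ω) / 2 - (t * (p + 1) - p) ^ 2 / (2 * p * (p + 1) ^ 2) := by
    intro t
    field_simp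
    ring
  constructor
  · rintro ⟨δ, hδ, hFδ⟩
    rw [key δ hδ, hq] at hFδ
    have hδ2 : 0 < δ ^ 2 := pow_pos hδ 2
    have hnn : 0 ≤ (δ ^ (p - 1) * (p + 1) - p) ^ 2 / (2 * p * (p + 1) ^ 2) :=
      div_nonneg (sq_nonneg _) (by positivity)
    nlinarith
  · intro hω'
    refine ⟨(p / (p + 1)) ^ (1 / (p - 1)), rpow_pos_of_pos (by positivity) _, ?_⟩
    set δ := (p / (p + 1)) ^ (1 / (p - 1)) with hδdef
    have hδ : 0 < δ := rpow_pos_of_pos (by positivity) _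
    have ht : δ ^ (p - 1) = p / (p + 1) := by
      rw [hδdef, ← rpow_mul (by positivity), one_div,
        inv_mul_cancel₀ (by linarith : p - 1 ≠ 0), rpow_one]
    rw [key δ hδ, hq, ht]
    have : (p / (p + 1) * (p + 1) - p) = 0 := by field_simp; ring
    rw [this]
    have h0 : (0:ℝ) ^ 2 / (2 * p * (p + 1) ^ 2) = 0 := by simp
    rw [h0, sub_zero]
    have hδ2 : 0 < δ ^ 2 := pow_pos hδ 2
    have : (0:ℝ) < (p / (p + 1) ^ 2 - ω) / 2 := by linarith
    positivity
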